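/- arXiv:1309.5484 — 6 statements merged into one kernel-verified Lean document; each statement's English description precedes it below -/
import Mathlib

section
/- Let X be a T1 topological space with a sequence of open covers (G_n) that is a weak development (i.e., for every x ∈ X and every choice of G_n ∈ 𝒢_n with x ∈ G_n for all n, the sequence of finite intersections (⋂_{i≤n} G_i)_n is a neighborhood base at x). Then the sequence (G_n) is a G_δ-diagonal sequence, i.e., for every x ∈ X, ⋂_n St(x, 𝒢_n) = {x}, where St(x, 𝒢_n) = ⋃{G ∈ 𝒢_n ∣ x ∈ G}. -/
open Set Topology Filter

variable {X : Type*}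

/-- A distance function: `d x y = 0 ↔ x = y` and symmetric. -/
def IsDistance (d : X → X → NNReal) : Prop :=
  (∀ x y, d x y = 0 ↔ x = y) ∧ (∀ x y, d x y = d y x)

/-- The ball of radius `ε` around `x` for the distance `d`. -/
def dball (d : X → X → NNReal) (x : X) (ε : NNReal) : Set X := {y | d x y < ε}

/-- The intersection `⋂_{k=1}^n V_k^x` for a family `V`. -/
def cInter (V : X → ℕ → Set X) (x : X) (n : ℕ) : Set X := ⋂ k ∈ Finset.Icc 1 n, V x k

lemma cInter_anti (V : X → ℕ → Set X) (x : X) {m n : ℕ} (h : m ≤ n) :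
    cInter V x n ⊆ cInter V x m := by
  intro y hy
  simp only [cInter, Set.mem_iInter] at *
  exact fun k hk => hy k (Finset.mem_Icc.mpr ⟨(Finset.mem_Icc.mp hk).1,
    le_trans (Finset.mem_Icc.mp hk).2 h⟩)

/-- The family `V` is adapted to `d`: `x ∈ ⋂_{k=1}^n V_k^x ⊆ B(x, 2^{-n})`. -/
def Adapted (d : X → X → NNReal) (V : X → ℕ → Set X) : Prop :=
  ∀ x : X, ∀ n : ℕ, 1 ≤ n →
    x ∈ cInter V x n ∧ cInter V x n ⊆ dball d x ((1/2 : NNReal) ^ n)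

/-- The topology `𝒯_{d,𝒱}`: `U` is open iff each `x ∈ U` has `⋂_{k=1}^n V_k^x ⊆ U` for some `n`. -/
def tDV (V : X → ℕ → Set X) : TopologicalSpace X where
  IsOpen U := ∀ x ∈ U, ∃ n : ℕ, cInter V x n ⊆ U
  isOpen_univ := fun _ _ => ⟨0, subset_univ _⟩
  isOpen_inter := by
    intro U W hU hW x hx
    obtain ⟨n, hn⟩ := hU x hx.1
    obtain ⟨m, hm⟩ := hW x hx.2
    exact ⟨max n m, subset_inter ((cInter_anti V x (le_max_left n m)).trans hn)
      ((cInter_anti V x (le_max_right n m)).trans hm)⟩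
  isOpen_sUnion := by
    intro S hS x hx
    obtain ⟨U, hU, hxU⟩ := hx
    obtain ⟨n, hn⟩ := hS U hU x hxU
    exact ⟨n, hn.trans (subset_sUnion_of_mem hU)⟩

/-- The topology `𝒯_d` induced by the distance `d`. -/
def tD (d : X → X → NNReal) : TopologicalSpace X where
  IsOpen U := ∀ x ∈ U, ∃ ε : NNReal, 0 < ε ∧ dball d x ε ⊆ U
  isOpen_univ := fun _ _ => ⟨1, one_pos, subset_univ _⟩
  isOpen_inter := by
    intro U W hU hW x hx
    obtain ⟨ε, hε, hεU⟩ := hU x hx.1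
    obtain ⟨δ, hδ, hδW⟩ := hW x hx.2
    refine ⟨min ε δ, lt_min hε hδ, subset_inter (fun y hy => hεU ?_) (fun y hy => hδW ?_)⟩
    · exact lt_of_lt_of_le (by simpa [dball] using hy) (min_le_left _ _)
    · exact lt_of_lt_of_le (by simpa [dball] using hy) (min_le_right _ _)
  isOpen_sUnion := by
    intro S hS x hx
    obtain ⟨U, hU, hxU⟩ := hx
    obtain ⟨ε, hε, hn⟩ := hS U hU x hxU
    exact ⟨ε, hε, hn.trans (subset_sUnion_of_mem hU)⟩

/-- `𝒱`-convergence of a sequence to `x`. -/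
def VConv (V : X → ℕ → Set X) (xs : ℕ → X) (x : X) : Prop :=
  ∀ m : ℕ, (Set.range xs \ cInter V x m).Finite

/-- The `𝒱`-closure of a set `A`. -/
def CV (V : X → ℕ → Set X) (A : Set X) : Set X :=
  A ∪ {x | ∃ xs : ℕ → X, (∀ n, xs n ∈ A) ∧ (Set.range xs).Infinite ∧ VConv V xs x}

/-- The condition (WS-M) together with `closure = 𝒱`-closure: `(X, d, 𝒱)` is weakly semi-metric. -/
def IsWeaklySemiMetric (d : X → X → NNReal) (V : X → ℕ → Set X) : Prop :=
  IsDistance d ∧ Adapted d V ∧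
  (∀ A : Set X, @closure X (tDV V) A = CV V A) ∧
  (∀ (xs : ℕ → X) (x : X), x ∈ ⋂ n, V (xs n) n →
    (⋂ n, V (xs n) n) = {x} ∧
    ∀ ys : ℕ → X, (∀ n, ys n ∈ ⋂ k ∈ Finset.Iic n, V (xs k) k) →
      Filter.Tendsto ys Filter.atTop (@nhds X (tDV V) x))

section WithTop
variable [TopologicalSpace X]

/-- A sequence of open covers of `X`. -/
def IsOpenCoverSeq (G : ℕ → Set (Set X)) : Prop :=
  ∀ n, (∀ g ∈ G n, IsOpen g) ∧ ⋃₀ G n = Set.univ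

/-- The star `St(x, 𝒢) = ⋃ {g ∈ 𝒢 ∣ x ∈ g}`. -/
def st (G : Set (Set X)) (x : X) : Set X := ⋃₀ {g ∈ G | x ∈ g}

/-- A weak development of `X`. -/
def IsWeakDevelopment (G : ℕ → Set (Set X)) : Prop :=
  IsOpenCoverSeq G ∧
  ∀ (x : X) (g : ℕ → Set X), (∀ n, g n ∈ G n) → (∀ n, x ∈ g n) →
    (𝓝 x).HasBasis (fun _ : ℕ => True) (fun n => ⋂ i ∈ Finset.Iic n, g i)

/-- A weakly `G_δ^*`-diagonal sequence. -/
def IsWeaklyGDeltaStarSeq (G : ℕ → Set (Set X)) : Prop :=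
  IsOpenCoverSeq G ∧
  ∀ (x : X) (g : ℕ → Set X), (∀ n, g n ∈ G n) → (∀ n, x ∈ g n) →
    (⋂ n, closure (⋂ k ∈ Finset.Iic n, g k)) = {x}

/-- A `G_δ^*`-diagonal sequence. -/
def IsGDeltaStarSeq (G : ℕ → Set (Set X)) : Prop :=
  IsOpenCoverSeq G ∧ ∀ x : X, (⋂ n, closure (st (G n) x)) = {x}

/-- A `G_δ`-diagonal sequence. -/
def IsGDeltaDiagSeq (G : ℕ → Set (Set X)) : Prop :=
  IsOpenCoverSeq G ∧ ∀ x : X, (⋂ n, st (G n) x) = {x}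

/-- A weakly `wΔ`-sequence. -/
def IsWeaklyWDeltaSeq (G : ℕ → Set (Set X)) : Prop :=
  IsOpenCoverSeq G ∧
  ∀ (x : X) (g : ℕ → Set X), (∀ n, g n ∈ G n) → (∀ n, x ∈ g n) →
    ∀ xs : ℕ → X, (∀ n, xs n ∈ ⋂ k ∈ Finset.Iic n, g k) →
      ∃ y, MapClusterPt y Filter.atTop xs

end WithTop

/-- a weak development is a `G_δ`-diagonal sequence. -/
theorem weakDevelopment_isGDeltaDiagSeq {X : Type*} [TopologicalSpace X] [T1Space X]
    (G : ℕ → Set (Set X)) (hG : IsWeakDevelopment G) :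
    IsGDeltaDiagSeq G := by
  obtain ⟨hcov, hbasis⟩ := hG
  refine ⟨hcov, fun x => ?_⟩
  apply Set.eq_singleton_iff_unique_mem.mpr
  constructor
  · -- x is in each star since the G n are covers
    refine Set.mem_iInter.mpr fun n => ?_
    have hx : x ∈ ⋃₀ G n := by rw [(hcov n).2]; trivial
    obtain ⟨g, hg, hxg⟩ := hx
    exact ⟨g, ⟨hg, hxg⟩, hxg⟩
  · intro y hy
    -- for each n, choose g n ∈ G n with x ∈ g n and y ∈ g n
    have h : ∀ n, ∃ g, g ∈ G n ∧ x ∈ g ∧ y ∈ g := by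
      intro n
      have := Set.mem_iInter.mp hy n
      obtain ⟨g, ⟨hg, hxg⟩, hyg⟩ := this
      exact ⟨g, hg, hxg, hyg⟩
    choose g hgG hxg hyg using h
    have hb := hbasis x g hgG hxg
    -- y is in every basic nhd of x
    by_contra hne
    have hU : IsOpen ({y}ᶜ : Set X) := isOpen_compl_singleton
    have hxU : x ∈ ({y}ᶜ : Set X) := by
      simp only [Set.mem_compl_iff, Set.mem_singleton_iff]
      exact fun h => hne h.symm
    obtain ⟨n, -, hn⟩ := hb.mem_iff.mp (hU.mem_nhds hxU)
    have hyn : y ∈ ⋂ i ∈ Finset.Iic n, g i :=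
      Set.mem_iInter₂.mpr fun i _ => hyg i
    exact hn hyn rfl
end

section
/- Every weakly symmetric space (X, d, 𝒱) with the topology 𝒯_{d,𝒱} is sequential: every sequentially closed subset is closed. -/
open Set Topology Filter

variable {X : Type*}

/-- every weakly symmetric space is sequential. -/
theorem weaklySymmetric_sequential {X : Type*} (d : X → X → NNReal) (V : X → ℕ → Set X)
    (hd : IsDistance d) (hV : Adapted d V) :
    @SequentialSpace X (tDV V) := by
  letI := tDV V
  constructor
  intro A hA
  rw [← isOpen_compl_iff]
  show ∀ x ∈ Aᶜ, ∃ n : ℕ, cInter V x n ⊆ Aᶜ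
  intro x hx
  by_contra h
  push_neg at h
  have hex : ∀ n, ∃ y, y ∈ cInter V x n ∧ y ∈ A := by
    intro n
    obtain ⟨y, hy, hy2⟩ := Set.not_subset.mp (h n)
    exact ⟨y, hy, not_not.mp hy2⟩
  choose xs hxs hxsA using hex
  have htend : Filter.Tendsto xs Filter.atTop (𝓝 x) := by
    rw [tendsto_nhds]
    intro U hU hxU
    obtain ⟨m, hm⟩ := hU x hxU
    filter_upwards [Filter.eventually_ge_atTop m] with n hn
    exact hm (cInter_anti V x hn (hxs n))
  exact hx (hA hxsA htend)
end

section
/- Let (X, d, 𝒱) be a weakly symmetric space in which every set consisting of a convergent sequence together with its limit is closed (this holds in particular when X is Hausdorff). Then for every sequence (x_n) in X, convergence x_n → x in 𝒯_{d,𝒱} implies 𝒱-convergence, i.e., for every m the set {x_n ∣ n ∈ ℕ} \ ⋂_{k=1}^m V_k^x is finite. -/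
open Set Topology Filter

variable {X : Type*}

/-- if every convergent sequence together with its limit is closed,
then convergence in `𝒯_{d,𝒱}` implies `𝒱`-convergence. -/
theorem tendsto_vConv {X : Type*} (d : X → X → NNReal) (V : X → ℕ → Set X)
    (hd : IsDistance d) (hV : Adapted d V)
    (hcl : ∀ (ys : ℕ → X) (y : X), Filter.Tendsto ys Filter.atTop (@nhds X (tDV V) y) →
      @IsClosed X (tDV V) (Set.range ys ∪ {y})) :
    ∀ (xs : ℕ → X) (x : X), Filter.Tendsto xs Filter.atTop (@nhds X (tDV V) x) →
      VConv V xs x := by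
  intro xs x hx m
  rcases Nat.eq_zero_or_pos m with rfl | hm
  · have h0 : cInter V x 0 = Set.univ := by simp [cInter]
    simp [VConv, h0]
  set C := cInter V x m with hC
  have hxC : x ∈ C := (hV x m hm).1
  have hI : {n | xs n ∉ C}.Finite := by
    by_contra hinf
    have hinf' : {n | xs n ∉ C}.Infinite := hinf
    obtain ⟨φ, hφ, hφmem⟩ := Filter.extraction_of_frequently_atTop
      (Nat.frequently_atTop_iff_infinite.mpr hinf')
    set ys := xs ∘ φ with hys_def
    have hys : Filter.Tendsto ys Filter.atTop (@nhds X (tDV V) x) :=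
      hx.comp hφ.tendsto_atTop
    have hF : @IsClosed X (tDV V) (Set.range ys ∪ {x}) := hcl ys x hys
    have hxA : x ∉ Set.range ys := by
      rintro ⟨n, hn⟩
      have : xs (φ n) ∈ C := by rw [show xs (φ n) = ys n from rfl, hn]; exact hxC
      exact hφmem n this
    have hFo : ∀ z ∈ (Set.range ys ∪ {x})ᶜ,
        ∃ k, cInter V z k ⊆ (Set.range ys ∪ {x})ᶜ :=
      hF.isOpen_compl
    have hUopen : @IsOpen X (tDV V) (Set.range ys)ᶜ := by
      intro z hz
      by_cases hzF : z ∈ Set.range ys ∪ {x}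
      · have hzx : z = x := by
          rcases hzF with h | h
          · exact absurd h hz
          · exact h
        subst hzx
        refine ⟨m, fun y hy hyA => ?_⟩
        obtain ⟨n, rfl⟩ := hyA
        exact hφmem n hy
      · obtain ⟨k, hk⟩ := hFo z hzF
        exact ⟨k, hk.trans (Set.compl_subset_compl.mpr Set.subset_union_left)⟩
    have hU : (Set.range ys)ᶜ ∈ @nhds X (tDV V) x :=
      letI := tDV V
      hUopen.mem_nhds hxA
    have := (hys.eventually hU).exists
    obtain ⟨n, hn⟩ := this
    exact hn (Set.mem_range_self n)
  have hsub : Set.range xs \ C ⊆ xs '' {n | xs n ∉ C} := by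
    rintro y ⟨⟨n, rfl⟩, hyC⟩
    exact ⟨n, hyC, rfl⟩
  exact (hI.image xs).subset hsub
end

section
/- Let (X, d, 𝒱) be a weakly symmetric space that is Fréchet–Urysohn and such that for every injective sequence (x_n), x_n → x in 𝒯_{d,𝒱} if and only if (x_n) 𝒱-converges to x. Then for every x ∈ X, the family {⋂_{k=1}^n V_k^x ∣ n ∈ ℕ} is a neighborhood base at x. -/
open Set Topology Filter

variable {X : Type*}

/-- in a Fréchet–Urysohn weakly symmetric space in which convergence of
injective sequences coincides with `𝒱`-convergence, `{⋂_{k=1}^n V_k^x}` is a neighborhood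
base at every `x`. -/
theorem frechet_nbhdBase {X : Type*} (d : X → X → NNReal) (V : X → ℕ → Set X)
    (hd : IsDistance d) (hV : Adapted d V)
    (hfu : @FrechetUrysohnSpace X (tDV V))
    (hiff : ∀ (xs : ℕ → X) (x : X), (Set.range xs).Infinite →
      (Filter.Tendsto xs Filter.atTop (@nhds X (tDV V) x) ↔ VConv V xs x)) :
    ∀ x : X, (@nhds X (tDV V) x).HasBasis (fun _ : ℕ => True) (cInter V x) := by
  intro x
  letI : TopologicalSpace X := tDV V
  haveI := hfu
  have hmem : ∀ (z : X) (n : ℕ), z ∈ cInter V z n := by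
    intro z n
    cases n with
    | zero => simp [cInter]
    | succ m => exact (hV z (m + 1) (Nat.succ_le_succ (Nat.zero_le m))).1
  -- if w is in all the cInter V z n, then z = w
  have hzero : ∀ z w : X, (∀ n : ℕ, 1 ≤ n → w ∈ cInter V z n) → z = w := by
    intro z w h
    by_contra hne
    have hd0 : d z w ≠ 0 := fun h0 => hne ((hd.1 z w).mp h0)
    have hdpos : (0 : ℝ) < (d z w : ℝ) := by
      have := pos_iff_ne_zero.mpr hd0
      exact_mod_cast this
    obtain ⟨n, hn⟩ := exists_pow_lt_of_lt_one hdpos (by norm_num : (1 / 2 : ℝ) < 1)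
    have hball : w ∈ dball d z ((1 / 2 : NNReal) ^ (n + 1)) :=
      (hV z (n + 1) (Nat.succ_le_succ (Nat.zero_le n))).2
        (h (n + 1) (Nat.succ_le_succ (Nat.zero_le n)))
    have hlt : (d z w : ℝ) < (1 / 2 : ℝ) ^ (n + 1) := by
      have : d z w < (1 / 2 : NNReal) ^ (n + 1) := hball
      have := (NNReal.coe_lt_coe.mpr this)
      simpa [NNReal.coe_pow] using this
    have hle : ((1 / 2 : ℝ)) ^ (n + 1) ≤ (1 / 2 : ℝ) ^ n :=
      pow_le_pow_of_le_one (by norm_num) (by norm_num) (Nat.le_succ n)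
    linarith
  -- the topology is T1
  haveI : T1Space X := by
    refine t1Space_iff_exists_open.mpr fun a b hab => ⟨{b}ᶜ, ?_, hab, by simp⟩
    show ∀ w ∈ ({b}ᶜ : Set X), ∃ n, cInter V w n ⊆ {b}ᶜ
    intro w hw
    by_contra hcon
    push_neg at hcon
    apply hw
    have : w = b := by
      apply hzero
      intro n hn
      obtain ⟨y, hy, hyb⟩ := Set.not_subset.mp (hcon n)
      have : y = b := by simpa using hyb
      exact this ▸ hy
    simp [this]
  -- each cInter V x n is a neighborhood of x
  have hnb : ∀ n, cInter V x n ∈ 𝓝 x := by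
    intro n
    have hcl : x ∉ closure ((cInter V x n)ᶜ) := by
      intro hx
      obtain ⟨u, hu, hconv⟩ := mem_closure_iff_seq_limit.mp hx
      by_cases hfin : (Set.range u).Finite
      · have hclosed : IsClosed (Set.range u) := hfin.isClosed
        have hxnot : x ∉ Set.range u := by
          rintro ⟨k, hk⟩
          exact (hu k) (hk ▸ hmem x n)
        have hev : ∀ᶠ k in Filter.atTop, u k ∈ (Set.range u)ᶜ :=
          hconv.eventually_mem (hclosed.isOpen_compl.mem_nhds hxnot)
        obtain ⟨k, hk⟩ := hev.exists
        exact hk (Set.mem_range_self k)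
      · have hvc := (hiff u x hfin).mp hconv
        have heq : Set.range u \ cInter V x n = Set.range u := by
          ext y
          refine ⟨fun h => h.1, fun h => ⟨h, fun hy => ?_⟩⟩
          obtain ⟨k, hk⟩ := h
          exact (hu k) (hk ▸ hy)
        exact hfin (heq ▸ hvc n)
    have hint : x ∈ interior (cInter V x n) := by
      rw [closure_compl] at hcl
      simpa using hcl
    exact mem_interior_iff_mem_nhds.mp hint
  refine Filter.hasBasis_iff.mpr fun S => ⟨fun hS => ?_, ?_⟩
  · obtain ⟨U, hUS, hU, hxU⟩ := mem_nhds_iff.mp hS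
    obtain ⟨n, hn⟩ := hU x hxU
    exact ⟨n, trivial, hn.trans hUS⟩
  · rintro ⟨n, -, hn⟩
    exact Filter.mem_of_superset (hnb n) hn
end

section
/- Every weakly developable T1 space is weakly semi-metrizable. -/
open Set Topology Filter

variable {X : Type*}

/-- every weakly developable T1 space is weakly semi-metrizable. -/
theorem weaklyDevelopable_weaklySemiMetrizable {X : Type*} [t : TopologicalSpace X] [T1Space X]
    (h : ∃ G : ℕ → Set (Set X), IsWeakDevelopment G) :
    ∃ (d : X → X → NNReal) (V : X → ℕ → Set X), IsWeaklySemiMetric d V ∧ t = tDV V := by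
  classical
  obtain ⟨G, hGcov, hGbasis⟩ := h
  have hgex : ∀ (x : X) (n : ℕ), ∃ s ∈ G n, x ∈ s := by
    intro x n
    have hx : x ∈ ⋃₀ G n := (hGcov n).2 ▸ Set.mem_univ x
    obtain ⟨s, hs, hxs⟩ := hx
    exact ⟨s, hs, hxs⟩
  choose g hg1 hg2 using hgex
  set W : X → ℕ → Set X := fun x n => ⋂ k ∈ Finset.Iic n, g x k with hWdef
  have hWx : ∀ x n, x ∈ W x n := fun x n => Set.mem_iInter₂.mpr fun k _ => hg2 x k
  have hWmem : ∀ x n k, k ≤ n → W x n ⊆ g x k := by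
    intro x n k hk y hy
    exact Set.mem_iInter₂.mp hy k (Finset.mem_Iic.mpr hk)
  have hWanti : ∀ (x : X) {m n : ℕ}, m ≤ n → W x n ⊆ W x m := by
    intro x m n hmn y hy
    exact Set.mem_iInter₂.mpr fun k hk =>
      Set.mem_iInter₂.mp hy k (Finset.mem_Iic.mpr (le_trans (Finset.mem_Iic.mp hk) hmn))
  have hWopen : ∀ x n, IsOpen (W x n) :=
    fun x n => isOpen_biInter_finset fun k _ => (hGcov k).1 _ (hg1 x k)
  have hWbasis : ∀ x : X, (𝓝 x).HasBasis (fun _ : ℕ => True) (W x) :=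
    fun x => hGbasis x (g x) (hg1 x) (hg2 x)
  have hcI : ∀ (x : X) (n : ℕ), W x n ⊆ cInter W x n := by
    intro x n y hy
    exact Set.mem_iInter₂.mpr fun k hk => hWanti x (Finset.mem_Icc.mp hk).2 hy
  have hcI' : ∀ (x : X) (n : ℕ), 1 ≤ n → cInter W x n ⊆ W x n := by
    intro x n hn y hy
    exact Set.mem_iInter₂.mp hy n (Finset.mem_Icc.mpr ⟨hn, le_rfl⟩)
  have hsep : ∀ x y : X, (∀ n, y ∈ W x n) → y = x := by
    intro x y hy
    by_contra hne
    have hmem : ({y}ᶜ : Set X) ∈ 𝓝 x :=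
      isOpen_compl_singleton.mem_nhds (by simpa [eq_comm] using hne)
    obtain ⟨n, -, hn⟩ := (hWbasis x).mem_iff.mp hmem
    exact hn (hy n) rfl
  have hEx : ∀ x y : X, ¬ x = y → ∃ n, y ∉ W x n := by
    intro x y hxy
    by_contra hc
    push_neg at hc
    exact hxy ((hsep x y hc).symm)
  set r : X → X → ℕ := fun x y => if h : x = y then 0 else Nat.find (hEx x y h) with hr
  set d : X → X → NNReal :=
    fun x y => if x = y then 0 else (1/2 : NNReal) ^ (max (r x y) (r y x)) with hd
  have hhalf : (0 : NNReal) < 1/2 := by norm_num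
  have hhalf1 : (1/2 : NNReal) < 1 := by rw [one_div]; exact inv_lt_one_of_one_lt₀ one_lt_two
  have hdlt : ∀ (x y : X) (n : ℕ), y ∈ W x n → d x y < (1/2 : NNReal) ^ n := by
    intro x y n hy
    by_cases hxy : x = y
    · simpa [hd, hxy] using pow_pos hhalf n
    · have hrx : n < r x y := by
        simp only [hr, dif_neg hxy]
        exact (Nat.lt_find_iff _ _).mpr fun m hm hmem => hmem (hWanti x hm hy)
      have hmax : n < max (r x y) (r y x) := lt_of_lt_of_le hrx (le_max_left _ _)
      simp only [hd, if_neg hxy]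
      exact pow_lt_pow_right_of_lt_one₀ hhalf hhalf1 hmax
  -- the topologies agree
  have hteq : t = tDV W := by
    refine TopologicalSpace.ext_iff.mpr fun U => ⟨?_, ?_⟩
    · intro hU x hxU
      obtain ⟨n, -, hn⟩ := (hWbasis x).mem_iff.mp (hU.mem_nhds hxU)
      exact ⟨max n 1, fun y hy =>
        hn (hWanti x (le_max_left n 1) (hcI' x _ (le_max_right n 1) hy))⟩
    · intro hU
      rw [isOpen_iff_mem_nhds]
      intro x hxU
      obtain ⟨n, hn⟩ := hU x hxU
      exact Filter.mem_of_superset ((hWopen x n).mem_nhds (hWx x n)) ((hcI x n).trans hn)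
  -- closure equals V-closure
  have hclos : ∀ A : Set X, closure A = CV W A := by
    intro A
    apply Set.Subset.antisymm
    · intro x hx
      by_cases hxA : x ∈ A
      · exact Or.inl hxA
      · have hpick : ∀ n : ℕ, ∃ y, y ∈ W x n ∧ y ∈ A := by
          intro n
          obtain ⟨y, hy1, hy2⟩ :=
            mem_closure_iff_nhds.mp hx (W x n) ((hWopen x n).mem_nhds (hWx x n))
          exact ⟨y, hy1, hy2⟩
        choose a ha1 ha2 using hpick
        refine Or.inr ⟨a, ha2, ?_, ?_⟩
        · by_contra hfin
          rw [Set.not_infinite] at hfin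
          haveI : Finite ↥(Set.range a) := hfin.to_subtype
          obtain ⟨⟨y, hy⟩, hy2⟩ :=
            Finite.exists_infinite_fiber (fun n => (⟨a n, Set.mem_range_self n⟩ : Set.range a))
          have hinf : {n : ℕ | a n = y}.Infinite := by
            have := Set.infinite_coe_iff.mp hy2
            refine this.mono ?_
            intro n hn
            simpa [Subtype.ext_iff] using hn
          have hyAll : ∀ m, y ∈ W x m := by
            intro m
            obtain ⟨k, hk, hlt⟩ := hinf.exists_gt m
            exact hWanti x (le_of_lt hlt) (hk ▸ ha1 k)
          obtain ⟨k, hk, -⟩ := hinf.exists_gt 0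
          exact hxA ((hsep x y hyAll) ▸ (hk ▸ ha2 k))
        · intro m
          apply Set.Finite.subset ((Set.finite_Iio m).image a)
          rintro y ⟨⟨k, rfl⟩, hy2⟩
          refine ⟨k, ?_, rfl⟩
          by_contra hk
          rw [Set.mem_Iio, not_lt] at hk
          exact hy2 (hcI x m (hWanti x hk (ha1 k)))
    · rintro x (hxA | ⟨xs, hxsA, hinf, hconv⟩)
      · exact subset_closure hxA
      · rw [mem_closure_iff_nhds]
        intro U hU
        obtain ⟨n, -, hn⟩ := (hWbasis x).mem_iff.mp hU
        obtain ⟨y, hy⟩ := (hinf.diff (hconv (max n 1))).nonempty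
        obtain ⟨⟨k, rfl⟩, hy2⟩ := hy
        have hyc : xs k ∈ cInter W x (max n 1) := by
          by_contra hc
          exact hy2 ⟨⟨k, rfl⟩, hc⟩
        exact ⟨xs k,
          hn (hWanti x (le_max_left n 1) (hcI' x _ (le_max_right n 1) hyc)), hxsA k⟩
  -- (WS-M)
  have hwsm : ∀ (xs : ℕ → X) (x : X), x ∈ ⋂ n, W (xs n) n →
      (⋂ n, W (xs n) n) = {x} ∧ ∀ ys : ℕ → X,
        (∀ n, ys n ∈ ⋂ k ∈ Finset.Iic n, W (xs k) k) →
        Filter.Tendsto ys Filter.atTop (𝓝 x) := by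
    intro xs x hx
    rw [Set.mem_iInter] at hx
    have hxh : ∀ n, x ∈ g (xs n) n := fun n => hWmem (xs n) n n le_rfl (hx n)
    have B := hGbasis x (fun n => g (xs n) n) (fun n => hg1 _ _) hxh
    constructor
    · ext y
      simp only [Set.mem_iInter, Set.mem_singleton_iff]
      constructor
      · intro hy
        by_contra hne
        have hmem : ({y}ᶜ : Set X) ∈ 𝓝 x :=
          isOpen_compl_singleton.mem_nhds (by simpa [eq_comm] using hne)
        obtain ⟨n, -, hn⟩ := B.mem_iff.mp hmem
        refine hn ?_ rfl
        exact Set.mem_iInter₂.mpr fun k _ => hWmem (xs k) k k le_rfl (hy k)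
      · rintro rfl
        exact hx
    · intro ys hys
      rw [B.tendsto_right_iff]
      intro n _
      refine Filter.eventually_atTop.mpr ⟨n, fun m hm => ?_⟩
      refine Set.mem_iInter₂.mpr fun k hk => ?_
      have hkm : k ≤ m := le_trans (Finset.mem_Iic.mp hk) hm
      exact hWmem (xs k) k k le_rfl
        (Set.mem_iInter₂.mp (hys m) k (Finset.mem_Iic.mpr hkm))
  refine ⟨d, W, ⟨⟨?_, ?_⟩, ?_, ?_, ?_⟩, hteq⟩
  · intro x y
    constructor
    · intro h0
      by_contra hxy
      have : d x y ≠ 0 := by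
        simp only [hd, if_neg hxy]
        exact pow_ne_zero _ (by norm_num)
      exact this h0
    · rintro rfl
      simp [hd]
  · intro x y
    by_cases hxy : x = y
    · subst hxy; rfl
    · have hyx : ¬ y = x := fun h => hxy h.symm
      simp only [hd, if_neg hxy, if_neg hyx, max_comm]
  · intro x n hn
    exact ⟨hcI x n (hWx x n), fun y hy => hdlt x y n (hcI' x n hn hy)⟩
  · rw [← hteq]
    exact hclos
  · rw [← hteq]
    exact hwsm
end

section
/- Let X be a weakly developable T1 space with weak development (𝒢_n) such that 𝒢_1 = {X} and the closures of members of 𝒢_{n+1} refine 𝒢_n for each n. Then for every x ∈ X and every choice G_n ∈ 𝒢_n with x ∈ G_n for all n, one has ⋂_n closure(G_n) = {x}. -/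
open Set Topology Filter

variable {X : Type*}

/-- for a weak development starting with the trivial cover whose closures
refine the previous level, `⋂_n closure (G_n) = {x}` for every choice `x ∈ G_n ∈ 𝒢_n`. -/
theorem weakDevelopment_inter_closure {X : Type*} [TopologicalSpace X] [T1Space X]
    (G : ℕ → Set (Set X)) (hG : IsWeakDevelopment G)
    (h1 : G 0 = {Set.univ})
    (href : ∀ n, ∀ g ∈ G (n + 1), ∃ g' ∈ G n, closure g ⊆ g') :
    ∀ (x : X) (g : ℕ → Set X), (∀ n, g n ∈ G n) → (∀ n, x ∈ g n) →
      (⋂ n, closure (g n)) = {x} := by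
  intro x g hg hxg
  apply Set.Subset.antisymm
  · intro y hy
    simp only [Set.mem_iInter] at hy
    choose h hhG hsub using fun n => href n (g (n + 1)) (hg (n + 1))
    have hxh : ∀ n, x ∈ h n := fun n => hsub n (subset_closure (hxg (n + 1)))
    have hyh : ∀ n, y ∈ h n := fun n => hsub n (hy (n + 1))
    have hb := hG.2 x h hhG hxh
    have hyU : ∀ U ∈ 𝓝 x, y ∈ U := by
      intro U hU
      obtain ⟨n, -, hs⟩ := hb.mem_iff.mp hU
      exact hs (Set.mem_iInter₂.mpr fun i _ => hyh i)
    have : x ∈ closure ({y} : Set X) := by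
      rw [mem_closure_iff_nhds]
      exact fun U hU => ⟨y, hyU U hU, rfl⟩
    rw [closure_singleton] at this
    exact this ▸ Set.mem_singleton x
  · intro z hz
    rw [Set.mem_singleton_iff] at hz
    subst hz
    exact Set.mem_iInter.mpr fun n => subset_closure (hxg n)
end
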